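/- Let n ≥ 2 and let x₁, …, xₙ be real numbers whose maximum m is attained by exactly one index. Then there exists a unique u ∈ (m, ∞) such that 1 − (1/n) Σ_{i=1}^n W((xᵢ − m)/(u − m)) = n/(n+1). (This is the defining equation F̂_u^{[BK,u]}(X₍ₙ₎) = n/(n+1) of the proposed boundary estimator û^{[BK]} of the unknown right support endpoint; existence and uniqueness follow because the left side decreases continuously from 1 − 1/(2n) > n/(n+1) to 1/2 < n/(n+1).) -/

import Mathlib

open MeasureTheory Filter Topology

/-- Existence and uniqueness of the proposed boundary estimator `û^{[BK]}` of
the unknown right support endpoint: if `W` is continuous, strictly increasing,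
with `W(t) → 0` as `t → −∞` and `W(0) = 1/2`, `n ≥ 2`, and the maximum `m` of
`x₁, …, xₙ` is attained by exactly one index, then there is a unique
`u ∈ (m, ∞)` solving the estimating equation
`1 − (1/n) Σᵢ W((xᵢ − m)/(u − m)) = n/(n+1)`. -/
theorem boundary_kernel_estimator_exists_unique
    (W : ℝ → ℝ) (hWcont : Continuous W) (hWmono : StrictMono W)
    (hWbot : Tendsto W atBot (nhds 0)) (hW0 : W 0 = 1 / 2)
    (n : ℕ) (hn : 2 ≤ n) (xs : Fin n → ℝ) (m : ℝ)
    (hmax : ∀ i, xs i ≤ m) (hattain : ∃! i, xs i = m) :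
    ∃! u : ℝ, u ∈ Set.Ioi m ∧
      1 - (1 / (n : ℝ)) * ∑ i, W ((xs i - m) / (u - m)) = (n : ℝ) / ((n : ℝ) + 1) := by
  obtain ⟨i₀, hi₀, hi₀u⟩ := hattain
  have hn2 : (2:ℝ) ≤ (n:ℝ) := by exact_mod_cast hn
  have hnpos : (0:ℝ) < n := by linarith
  set c : ℝ := (n:ℝ) / ((n:ℝ) + 1) with hc
  set f : ℝ → ℝ := fun u => ∑ i, W ((xs i - m) / (u - m)) with hfdef
  -- the equation is equivalent to f u = c
  have key : ∀ u : ℝ, (1 - (1 / (n : ℝ)) * f u = c) ↔ f u = c := by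
    intro u
    have hn' : (n:ℝ) ≠ 0 := by linarith
    have hn1 : (n:ℝ) + 1 ≠ 0 := by linarith
    rw [hc]
    constructor
    · intro h
      field_simp at h ⊢
      nlinarith [h]
    · intro h
      rw [h]
      field_simp
      ring
  -- continuity on Ioi m
  have hfc : ContinuousOn f (Set.Ioi m) := by
    apply continuousOn_finset_sum
    intro i _
    apply hWcont.comp_continuousOn
    apply ContinuousOn.div continuousOn_const (by fun_prop)
    intro u hu
    have : m < u := hu
    intro h
    have : u = m := by linarith [sub_eq_zero.mp h]
    linarith
  -- strict monotonicity on Ioi m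
  haveI : Nontrivial (Fin n) := Fin.nontrivial_iff_two_le.mpr hn
  obtain ⟨j, hj⟩ := exists_ne i₀
  have hjlt : xs j < m := lt_of_le_of_ne (hmax j) (fun h => hj (hi₀u j h))
  have hmono : StrictMonoOn f (Set.Ioi m) := by
    intro u hu v hv huv
    have hum : (0:ℝ) < u - m := sub_pos.mpr hu
    have hvm : (0:ℝ) < v - m := sub_pos.mpr hv
    apply Finset.sum_lt_sum
    · intro i _
      rcases eq_or_lt_of_le (hmax i) with h | h
      · rw [h]; simp
      · apply le_of_lt
        apply hWmono
        rw [div_lt_div_iff₀ hum hvm]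
        exact mul_lt_mul_of_neg_left (sub_lt_sub_right huv m) (by linarith)
    · refine ⟨j, Finset.mem_univ j, ?_⟩
      apply hWmono
      rw [div_lt_div_iff₀ hum hvm]
      exact mul_lt_mul_of_neg_left (sub_lt_sub_right huv m) (by linarith)
  -- limit at m from the right : f → 1/2
  have hsubtend : Tendsto (fun u => (u - m)) (𝓝[>] m) (𝓝[>] (0:ℝ)) := by
    apply tendsto_nhdsWithin_of_tendsto_nhds_of_eventually_within
    · have h1 : Tendsto (fun u : ℝ => u - m) (𝓝 m) (𝓝 (m - m)) :=
        (continuous_id.sub continuous_const).tendsto m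
      rw [sub_self] at h1
      exact h1.mono_left nhdsWithin_le_nhds
    · filter_upwards [self_mem_nhdsWithin] with u hu
      exact Set.mem_Ioi.mpr (sub_pos.mpr (Set.mem_Ioi.mp hu))
  have hinvtend : Tendsto (fun u => (u - m)⁻¹) (𝓝[>] m) atTop :=
    tendsto_inv_nhdsGT_zero.comp hsubtend
  have hlim1 : Tendsto f (𝓝[>] m) (𝓝 (1/2)) := by
    have hterm : ∀ i : Fin n, Tendsto (fun u => W ((xs i - m) / (u - m))) (𝓝[>] m)
        (𝓝 (if i = i₀ then 1/2 else 0)) := by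
      intro i
      rcases eq_or_ne i i₀ with h | h
      · simp only [h, if_pos rfl]
        have : ∀ u : ℝ, W ((xs i₀ - m) / (u - m)) = 1/2 := by
          intro u; rw [hi₀]; simp [hW0]
        subst h
        simp only [this]
        exact tendsto_const_nhds
      · simp only [if_neg h]
        have hxi : xs i < m := lt_of_le_of_ne (hmax i) (fun hh => h (hi₀u i hh))
        have hdiv : Tendsto (fun u => (xs i - m) / (u - m)) (𝓝[>] m) atBot := by
          have := hinvtend.const_mul_atTop_of_neg (show xs i - m < 0 by linarith)
          simpa [div_eq_mul_inv] using this
        exact hWbot.comp hdiv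
    have := tendsto_finset_sum Finset.univ (fun i _ => hterm i)
    simpa [Finset.sum_ite_eq', hfdef] using this
  -- limit at infinity : f → n/2
  have hlim2 : Tendsto f atTop (𝓝 ((n:ℝ) * (1/2))) := by
    have hterm : ∀ i : Fin n, Tendsto (fun u => W ((xs i - m) / (u - m))) atTop (𝓝 (1/2)) := by
      intro i
      have hden : Tendsto (fun u : ℝ => u - m) atTop atTop :=
        tendsto_atTop_add_const_right atTop (-m) tendsto_id
      have hdiv : Tendsto (fun u => (xs i - m) / (u - m)) atTop (𝓝 0) :=
        Tendsto.div_atTop tendsto_const_nhds hden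
      have := (hWcont.tendsto 0).comp hdiv
      rwa [hW0] at this
    have := tendsto_finset_sum Finset.univ (fun i _ => hterm i)
    simpa [hfdef, Finset.sum_const, Finset.card_univ, nsmul_eq_mul] using this
  have hc1 : (1:ℝ)/2 < c := by
    rw [hc, lt_div_iff₀ (by linarith : (0:ℝ) < (n:ℝ)+1)]
    linarith
  have hc2 : c < (n:ℝ) * (1/2) := by
    rw [hc, div_lt_iff₀ (by linarith : (0:ℝ) < (n:ℝ)+1)]
    nlinarith
  -- pick a with f a < c
  obtain ⟨a, hfa, ha⟩ := ((hlim1.eventually_lt_const hc1).and self_mem_nhdsWithin).exists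
  -- pick b > a with f b > c
  obtain ⟨b, hfb, hab⟩ := ((hlim2.eventually_const_lt hc2).and (eventually_gt_atTop a)).exists
  have ham : m < a := ha
  have hbm : m < b := lt_trans ham hab
  -- IVT
  have hsub : Set.Icc a b ⊆ Set.Ioi m := fun t ht => lt_of_lt_of_le ham ht.1
  have := intermediate_value_Ioo (le_of_lt hab) (hfc.mono hsub)
  obtain ⟨u, hu, hfu⟩ := this ⟨hfa, hfb⟩
  have hum : u ∈ Set.Ioi m := lt_trans ham hu.1
  refine ⟨u, ⟨hum, (key u).mpr hfu⟩, ?_⟩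
  rintro v ⟨hvm, hveq⟩
  have hfv : f v = c := (key v).mp hveq
  exact hmono.injOn hvm hum (by rw [hfv, hfu])
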